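/- Let x be a feasible half-integral Held–Karp solution whose weight-1/2 edges decompose into edge-disjoint triangles, and suppose some comb inequality is violated by x. Among all violated combs choose one with the minimum number of teeth t; then the support graph of x restricted to the handle H is connected. -/

import Mathlib

set_option linter.unusedSectionVars false
set_option maxHeartbeats 1000000


open Finset

variable {V : Type*} [Fintype V] [DecidableEq V]

/-- Total x-weight of edges leaving `S` (each crossing edge counted once, from inside to outside). -/
def cutVal (x : V → V → ℝ) (S : Finset V) : ℝ := ∑ i ∈ S, ∑ j ∈ Sᶜ, x i j

/-- Total x-weight of edges between disjoint sets `A` and `B`. -/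
def eVal (x : V → V → ℝ) (A B : Finset V) : ℝ := ∑ i ∈ A, ∑ j ∈ B, x i j

/-- The support graph of an edge weighting. -/
def support (x : V → V → ℝ) : SimpleGraph V where
  Adj i j := i ≠ j ∧ (0 < x i j ∨ 0 < x j i)
  symm := ⟨fun i j h => ⟨h.1.symm, h.2.symm⟩⟩
  loopless := ⟨fun i h => h.1 rfl⟩

/-- The weight-1/2 edges of `x` decompose into the edge-disjoint triangles `𝒯`. -/
def TriDecomp (x : V → V → ℝ) (𝒯 : Finset (Finset V)) : Prop :=
  (∀ tr ∈ 𝒯, tr.card = 3) ∧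
  (∀ tr ∈ 𝒯, ∀ i ∈ tr, ∀ j ∈ tr, i ≠ j → x i j = 1 / 2) ∧
  (∀ i j : V, i ≠ j → x i j = 1 / 2 → ∃! tr, tr ∈ 𝒯 ∧ i ∈ tr ∧ j ∈ tr)

/-- A comb inequality violated by : the handle  and teeth  form a comb and the comb
inequality fails. -/
def ViolatedComb (x : V → V → ℝ) (H : Finset V) {t : ℕ} (T : Fin t → Finset V) : Prop :=
  Odd t ∧ (∀ i j, i ≠ j → Disjoint (T i) (T j)) ∧
  (∀ i, ((T i) ∩ H).Nonempty ∧ ((T i) \ H).Nonempty) ∧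
  cutVal x H + ∑ i, cutVal x (T i) < 3 * (t : ℝ) + 1

lemma eVal_nonneg {x : V → V → ℝ} (hx : ∀ i j, 0 ≤ x i j) (A B : Finset V) :
    0 ≤ eVal x A B :=
  Finset.sum_nonneg fun _ _ => Finset.sum_nonneg fun _ _ => hx _ _

lemma eVal_mono {x : V → V → ℝ} (hx : ∀ i j, 0 ≤ x i j) {A A' B B' : Finset V}
    (hA : A ⊆ A') (hB : B ⊆ B') : eVal x A B ≤ eVal x A' B' := by
  refine le_trans (Finset.sum_le_sum fun i _ =>
    Finset.sum_le_sum_of_subset_of_nonneg hB fun j _ _ => hx i j) ?_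
  exact Finset.sum_le_sum_of_subset_of_nonneg hA fun i _ _ =>
    Finset.sum_nonneg fun j _ => hx i j

lemma eVal_union_left {x : V → V → ℝ} {A B : Finset V} (h : Disjoint A B) (C : Finset V) :
    eVal x (A ∪ B) C = eVal x A C + eVal x B C :=
  Finset.sum_union h

lemma eVal_union_right {x : V → V → ℝ} {B C : Finset V} (A : Finset V) (h : Disjoint B C) :
    eVal x A (B ∪ C) = eVal x A B + eVal x A C := by
  unfold eVal
  rw [← Finset.sum_add_distrib]
  exact Finset.sum_congr rfl fun i _ => Finset.sum_union h

lemma eVal_comm {x : V → V → ℝ} (hsym : ∀ i j, x i j = x j i) (A B : Finset V) :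
    eVal x A B = eVal x B A := by
  unfold eVal
  rw [Finset.sum_comm]
  exact Finset.sum_congr rfl fun i _ => Finset.sum_congr rfl fun j _ => hsym _ _

lemma cutVal_eq_eVal (x : V → V → ℝ) (S : Finset V) : cutVal x S = eVal x S Sᶜ := rfl

lemma cutVal_union {x : V → V → ℝ} (hsym : ∀ i j, x i j = x j i) {A B : Finset V}
    (h : Disjoint A B) :
    cutVal x (A ∪ B) + 2 * eVal x A B = cutVal x A + cutVal x B := by
  have hd := Finset.disjoint_left.1 h
  have hAc : Aᶜ = (A ∪ B)ᶜ ∪ B := by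
    ext v
    simp only [Finset.mem_compl, Finset.mem_union, not_or]
    constructor
    · intro hv
      by_cases hb : v ∈ B
      · exact Or.inr hb
      · exact Or.inl ⟨hv, hb⟩
    · rintro (⟨hv, _⟩ | hv)
      · exact hv
      · exact fun hA => (hd hA hv).elim
  have hBc : Bᶜ = (A ∪ B)ᶜ ∪ A := by
    ext v
    simp only [Finset.mem_compl, Finset.mem_union, not_or]
    constructor
    · intro hv
      by_cases hb : v ∈ A
      · exact Or.inr hb
      · exact Or.inl ⟨hb, hv⟩
    · rintro (⟨_, hv⟩ | hv)
      · exact hv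
      · exact fun hB => (hd hv hB).elim
  have d1 : Disjoint ((A ∪ B)ᶜ) B :=
    Finset.disjoint_left.2 fun v hv hb => (Finset.mem_compl.1 hv) (Finset.mem_union_right _ hb)
  have d2 : Disjoint ((A ∪ B)ᶜ) A :=
    Finset.disjoint_left.2 fun v hv hb => (Finset.mem_compl.1 hv) (Finset.mem_union_left _ hb)
  rw [cutVal_eq_eVal, cutVal_eq_eVal, cutVal_eq_eVal, hAc, hBc,
    eVal_union_right A d1, eVal_union_right B d2, eVal_union_left h,
    eVal_comm hsym B A]
  ring

open Classical in
lemma cutVal_int {x : V → V → ℝ}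
    (hsym : ∀ i j, x i j = x j i) (hdiag : ∀ i, x i i = 0)
    (hval : ∀ i j, x i j = 0 ∨ x i j = 1 / 2 ∨ x i j = 1)
    (hdeg : ∀ i : V, ∑ j, x i j = 2) (S : Finset V) :
    ∃ k : ℤ, cutVal x S = k := by
  set n : V → V → ℕ := fun i j => if x i j = 0 then 0 else if x i j = 1/2 then 1 else 2 with hn
  have hxn : ∀ i j, x i j = (n i j : ℝ) / 2 := by
    intro i j
    rcases hval i j with h | h | h <;> simp [hn, h] <;> norm_num
  have hnsym : ∀ i j, n i j = n j i := by
    intro i j; simp only [hn, hsym i j]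
  have hndiag : ∀ i, n i i = 0 := by intro i; simp [hn, hdiag i]
  set m : ℕ := ∑ i ∈ S, ∑ j ∈ S, n i j with hm
  have hmeven : Even m := by
    have h2 : ((m : ZMod 2) = 0) := by
      have : (m : ZMod 2) = ∑ p ∈ S ×ˢ S, ((n p.1 p.2 : ZMod 2)) := by
        rw [hm, Finset.sum_product]
        push_cast
        rfl
      rw [this]
      refine Finset.sum_involution (fun p _ => (p.2, p.1)) ?_ ?_ ?_ ?_
      · intro p _
        have : (n p.2 p.1 : ZMod 2) = (n p.1 p.2 : ZMod 2) := by rw [hnsym]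
        rw [this, ← two_mul]
        exact mul_eq_zero_of_left (by decide) _
      · intro p _ hne h
        apply hne
        have h1 : p.2 = p.1 := congrArg Prod.fst h
        rw [h1, hndiag]
        simp
      · intro p hp
        simp only [Finset.mem_product] at hp ⊢
        exact ⟨hp.2, hp.1⟩
      · intro p _; rfl
    exact (even_iff_two_dvd).2 ((ZMod.natCast_eq_zero_iff m 2).1 h2)
  obtain ⟨k', hk'⟩ := hmeven
  refine ⟨2 * S.card - k', ?_⟩
  have hsplit : ∀ i ∈ S, ∑ j ∈ Sᶜ, x i j = 2 - ∑ j ∈ S, x i j := by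
    intro i _
    have := Finset.sum_add_sum_compl S (fun j => x i j)
    rw [hdeg i] at this
    linarith
  have h1 : cutVal x S = 2 * S.card - ∑ i ∈ S, ∑ j ∈ S, x i j := by
    unfold cutVal
    rw [Finset.sum_congr rfl hsplit, Finset.sum_sub_distrib, Finset.sum_const]
    simp [mul_comm]
  have h2 : ∑ i ∈ S, ∑ j ∈ S, x i j = (m : ℝ) / 2 := by
    rw [hm]
    push_cast
    rw [Finset.sum_div]
    refine Finset.sum_congr rfl fun i _ => ?_
    rw [Finset.sum_div]
    exact Finset.sum_congr rfl fun j _ => hxn i j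
  have h3 : (m : ℝ) = 2 * k' := by rw [hk']; push_cast; ring
  rw [h1, h2, h3]
  push_cast
  ring

lemma sum_eVal_le {x : V → V → ℝ} (hx : ∀ i j, 0 ≤ x i j) {ι : Type*} [DecidableEq ι]
    (s : Finset ι) (A B : ι → Finset V) (S : Finset V)
    (hd : ∀ i ∈ s, ∀ j ∈ s, i ≠ j → Disjoint (A i) (A j))
    (hA : ∀ i ∈ s, A i ⊆ S) (hB : ∀ i ∈ s, B i ⊆ Sᶜ) :
    ∑ i ∈ s, eVal x (A i) (B i) ≤ cutVal x S := by
  have h1 : ∑ i ∈ s, eVal x (A i) (B i) ≤ ∑ i ∈ s, eVal x (A i) Sᶜ :=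
    Finset.sum_le_sum fun i hi => eVal_mono hx Finset.Subset.rfl (hB i hi)
  have hpd : Set.PairwiseDisjoint (↑s) A := fun i hi j hj hij => hd i hi j hj hij
  have h2 : ∑ i ∈ s, eVal x (A i) Sᶜ = eVal x (s.biUnion A) Sᶜ := by
    unfold eVal
    exact (Finset.sum_biUnion hpd).symm
  have h3 : eVal x (s.biUnion A) Sᶜ ≤ eVal x S Sᶜ :=
    eVal_mono hx (Finset.biUnion_subset.2 hA) Finset.Subset.rfl
  calc ∑ i ∈ s, eVal x (A i) (B i) ≤ ∑ i ∈ s, eVal x (A i) Sᶜ := h1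
    _ = eVal x (s.biUnion A) Sᶜ := h2
    _ ≤ eVal x S Sᶜ := h3
    _ = cutVal x S := rfl

lemma sum_eq_forall_eq {ι : Type*} [DecidableEq ι] (s : Finset ι) (f : ι → ℝ) (c : ℝ)
    (hge : ∀ i ∈ s, c ≤ f i) (hsum : ∑ i ∈ s, f i ≤ c * s.card) : ∀ i ∈ s, f i = c := by
  intro i hi
  have h1 : ∑ j ∈ s.erase i, f j + f i = ∑ j ∈ s, f j := Finset.sum_erase_add s f hi
  have hcard : 1 ≤ s.card := Finset.card_pos.2 ⟨i, hi⟩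
  have h2 : c * ((s.card : ℝ) - 1) ≤ ∑ j ∈ s.erase i, f j := by
    have h := Finset.card_nsmul_le_sum (s.erase i) f c
      (fun j hj => hge j (Finset.mem_of_mem_erase hj))
    rw [Finset.card_erase_of_mem hi, nsmul_eq_mul] at h
    have hc : ((s.card - 1 : ℕ) : ℝ) = (s.card : ℝ) - 1 := by
      rw [Nat.cast_sub hcard]; norm_num
    rw [hc] at h
    linarith
  have h3 : c ≤ f i := hge i hi
  linarith


/-- In a violated comb with the minimum number of teeth, the support graph restricted to the
handle is connected. -/
theorem minimal_violated_comb_handle_connected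
    (x : V → V → ℝ)
    (hsym : ∀ i j, x i j = x j i)
    (hdiag : ∀ i, x i i = 0)
    (hval : ∀ i j, x i j = 0 ∨ x i j = 1 / 2 ∨ x i j = 1)
    (hdeg : ∀ i : V, ∑ j, x i j = 2)
    (hsub : ∀ S : Finset V, S.Nonempty → S ≠ Finset.univ → 2 ≤ cutVal x S)
    (𝒯 : Finset (Finset V)) (htri : TriDecomp x 𝒯)
    (H : Finset V) (t : ℕ) (T : Fin t → Finset V)
    (hviol : ViolatedComb x H T)
    (hmin : ∀ t' : ℕ, t' < t → ∀ H' : Finset V, ∀ T' : Fin t' → Finset V,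
      ¬ ViolatedComb x H' T') :
    ((support x).induce ((H : Finset V) : Set V)).Connected := by
  classical
  obtain ⟨ht_odd, hdisj, hteeth, hlt⟩ := hviol
  have hx0 : ∀ i j, 0 ≤ x i j := by
    intro i j; rcases hval i j with h | h | h <;> rw [h] <;> norm_num
  have htpos : 0 < t := ht_odd.pos
  set i0 : Fin t := ⟨0, htpos⟩ with hi0
  have hHne : H.Nonempty := by
    obtain ⟨v, hv⟩ := (hteeth i0).1
    exact ⟨v, (Finset.mem_inter.1 hv).2⟩
  have hHproper : H ≠ Finset.univ := by
    obtain ⟨v, hv⟩ := (hteeth i0).2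
    intro h
    exact (Finset.mem_sdiff.1 hv).2 (h ▸ Finset.mem_univ v)
  by_contra hcon
  set G := ((support x).induce ((H : Finset V) : Set V)) with hG
  have hGne : Nonempty ((H : Finset V) : Set V) := by
    obtain ⟨v, hv⟩ := hHne
    exact ⟨⟨v, by simpa using hv⟩⟩
  haveI := hGne
  have hpre : ¬ G.Preconnected := fun h => hcon (SimpleGraph.Connected.mk h)
  simp only [SimpleGraph.Preconnected, not_forall] at hpre
  obtain ⟨a, b, hab⟩ := hpre
  set H₁ : Finset V :=
    H.filter (fun v => ∀ h : v ∈ H, G.Reachable a ⟨v, Finset.mem_coe.mpr h⟩) with hH₁def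
  set H₂ : Finset V := H \ H₁ with hH₂def
  have haH : (a : V) ∈ H := Finset.mem_coe.mp a.2
  have hbH : (b : V) ∈ H := Finset.mem_coe.mp b.2
  have ha1 : (a : V) ∈ H₁ := by
    rw [hH₁def, Finset.mem_filter]
    exact ⟨haH, fun _ => SimpleGraph.Reachable.refl a⟩
  have hb2 : (b : V) ∈ H₂ := by
    rw [hH₂def, Finset.mem_sdiff]
    refine ⟨hbH, fun hb1 => ?_⟩
    rw [hH₁def, Finset.mem_filter] at hb1
    exact hab (hb1.2 hbH)
  have key : ∀ i ∈ H₁, ∀ j ∈ H₂, x i j = 0 := by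
    intro i hi j hj
    by_contra hne
    have hxpos : 0 < x i j := lt_of_le_of_ne (hx0 i j) (Ne.symm hne)
    have hij : i ≠ j := by rintro rfl; exact hne (hdiag i)
    rw [hH₁def, Finset.mem_filter] at hi
    rw [hH₂def, Finset.mem_sdiff] at hj
    have hadj : G.Adj ⟨i, Finset.mem_coe.mpr hi.1⟩ ⟨j, Finset.mem_coe.mpr hj.1⟩ :=
      show i ≠ j ∧ (0 < x i j ∨ 0 < x j i) from ⟨hij, Or.inl hxpos⟩
    refine hj.2 ?_
    rw [hH₁def, Finset.mem_filter]
    exact ⟨hj.1, fun _ => (hi.2 hi.1).trans hadj.reachable⟩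
  have hH₁sub : H₁ ⊆ H := by rw [hH₁def]; exact Finset.filter_subset _ _
  have hH₂sub : H₂ ⊆ H := by rw [hH₂def]; exact Finset.sdiff_subset
  have hH12 : H₁ ∪ H₂ = H := by
    rw [hH₂def]; exact Finset.union_sdiff_of_subset hH₁sub
  have hd12 : Disjoint H₁ H₂ := by rw [hH₂def]; exact Finset.disjoint_sdiff
  have hH₁ne : H₁.Nonempty := ⟨a, ha1⟩
  have hH₂ne : H₂.Nonempty := ⟨b, hb2⟩
  have hsubproper : ∀ S' : Finset V, S' ⊆ H → S' ≠ Finset.univ := by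
    intro S' hS' h
    exact hHproper (Finset.univ_subset_iff.1 (h ▸ hS'))
  have h2H₁ : 2 ≤ cutVal x H₁ := hsub H₁ hH₁ne (hsubproper H₁ hH₁sub)
  have h2H₂ : 2 ≤ cutVal x H₂ := hsub H₂ hH₂ne (hsubproper H₂ hH₂sub)
  have eval0 : eVal x H₁ H₂ = 0 :=
    Finset.sum_eq_zero fun i hi => Finset.sum_eq_zero fun j hj => key i hi j hj
  have hcutsum : cutVal x H₁ + cutVal x H₂ = cutVal x H := by
    have := cutVal_union hsym hd12
    rw [hH12, eval0] at this
    linarith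
  by_cases hU : ∃ i, T i = Finset.univ
  · obtain ⟨iu, hiu⟩ := hU
    have hall : ∀ j, j = iu := by
      intro j
      by_contra hj
      obtain ⟨v, hv⟩ := (hteeth j).1
      have hvj : v ∈ T j := (Finset.mem_inter.1 hv).1
      exact Finset.disjoint_left.1 (hdisj j iu hj) hvj (hiu ▸ Finset.mem_univ v)
    have hsum0 : ∑ i, cutVal x (T i) = 0 := by
      rw [Fintype.sum_eq_single iu (fun j hj => absurd (hall j) hj)]
      rw [hiu]
      simp [cutVal]
    have ht1 : t = 1 := by
      have hc : Fintype.card (Fin t) ≤ 1 :=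
        Fintype.card_le_one_iff.2 fun c d => (hall c).trans (hall d).symm
      rw [Fintype.card_fin] at hc
      omega
    rw [hsum0, ht1] at hlt
    norm_num at hlt
    linarith
  · push_neg at hU
    set A : Fin t → Finset V := fun i => T i ∩ H with hAdef
    set B : Fin t → Finset V := fun i => T i \ H with hBdef
    have hABu : ∀ i, A i ∪ B i = T i := by
      intro i
      rw [hAdef, hBdef]
      ext v
      simp only [Finset.mem_union, Finset.mem_inter, Finset.mem_sdiff]
      tauto
    have hABd : ∀ i, Disjoint (A i) (B i) := by
      intro i
      rw [hAdef, hBdef]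
      exact Finset.disjoint_left.2 fun v hv hv' =>
        (Finset.mem_sdiff.1 hv').2 (Finset.mem_inter.1 hv).2
    have hAsubH : ∀ i, A i ⊆ H := fun i => by rw [hAdef]; exact Finset.inter_subset_right
    have hAsubT : ∀ i, A i ⊆ T i := fun i => by rw [hAdef]; exact Finset.inter_subset_left
    have hBsubT : ∀ i, B i ⊆ T i := fun i => by rw [hBdef]; exact Finset.sdiff_subset
    have hBHc : ∀ i, ∀ v ∈ B i, v ∉ H := fun i v hv => (Finset.mem_sdiff.1 hv).2
    have hAne : ∀ i, (A i).Nonempty := fun i => (hteeth i).1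
    have hBne : ∀ i, (B i).Nonempty := fun i => (hteeth i).2
    have hTne : ∀ i, (T i).Nonempty := fun i => ((hAne i).mono (hAsubT i))
    have hBproper : ∀ i, B i ≠ Finset.univ := by
      intro i h
      obtain ⟨v, hv⟩ := hHne
      exact hBHc i v (h ▸ Finset.mem_univ v) hv
    have h2A : ∀ i, 2 ≤ cutVal x (A i) :=
      fun i => hsub (A i) (hAne i) (hsubproper (A i) (hAsubH i))
    have h2B : ∀ i, 2 ≤ cutVal x (B i) := fun i => hsub (B i) (hBne i) (hBproper i)
    have h2T : ∀ i, 2 ≤ cutVal x (T i) := fun i => hsub (T i) (hTne i) (hU i)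
    set e : Fin t → ℝ := fun i => eVal x (A i) (B i) with hedef
    have hcutT : ∀ i, cutVal x (T i) + 2 * e i = cutVal x (A i) + cutVal x (B i) := by
      intro i
      have := cutVal_union hsym (hABd i)
      rw [hABu i] at this
      exact this
    have hTdisjA : ∀ i ∈ (Finset.univ : Finset (Fin t)), ∀ j ∈ (Finset.univ : Finset (Fin t)),
        i ≠ j → Disjoint (A i) (A j) :=
      fun i _ j _ hij => (hdisj i j hij).mono (hAsubT i) (hAsubT j)
    have F4 : ∑ i, e i ≤ cutVal x H := by
      refine sum_eVal_le hx0 Finset.univ A B H hTdisjA (fun i _ => hAsubH i) ?_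
      intro i _ v hv
      exact Finset.mem_compl.2 (hBHc i v hv)
    have F5 : cutVal x H + ∑ i, cutVal x (T i) ≤ 3 * t := by
      obtain ⟨kH, hkH⟩ := cutVal_int hsym hdiag hval hdeg H
      choose kT hkT using fun i => cutVal_int hsym hdiag hval hdeg (T i)
      have hz : cutVal x H + ∑ i, cutVal x (T i) = ((kH + ∑ i, kT i : ℤ) : ℝ) := by
        push_cast
        rw [hkH]
        congr 1
        exact Finset.sum_congr rfl fun i _ => hkT i
      have hz3 : kH + ∑ i, kT i < 3 * (t : ℤ) + 1 := by
        have : ((kH + ∑ i, kT i : ℤ) : ℝ) < 3 * t + 1 := hz ▸ hlt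
        exact_mod_cast this
      have hz4 : kH + ∑ i, kT i ≤ 3 * (t : ℤ) := by omega
      rw [hz]
      exact_mod_cast hz4
    have hcardt : (Finset.univ : Finset (Fin t)).card = t := by simp
    have hTsum_ge : 2 * (t : ℝ) ≤ ∑ i, cutVal x (T i) := by
      have h := Finset.card_nsmul_le_sum Finset.univ (fun i => cutVal x (T i)) 2
        (fun i _ => h2T i)
      rw [hcardt, nsmul_eq_mul] at h
      linarith
    have hABsum : ∑ i, (cutVal x (A i) + cutVal x (B i))
        = ∑ i, cutVal x (T i) + 2 * ∑ i, e i := by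
      rw [Finset.mul_sum, ← Finset.sum_add_distrib]
      exact Finset.sum_congr rfl fun i _ => (hcutT i).symm
    have hABsum_ge : 4 * (t : ℝ) ≤ ∑ i, (cutVal x (A i) + cutVal x (B i)) := by
      have h := Finset.card_nsmul_le_sum Finset.univ
        (fun i => cutVal x (A i) + cutVal x (B i)) 4
        (fun i _ => by show (4:ℝ) ≤ cutVal x (A i) + cutVal x (B i); linarith [h2A i, h2B i])
      rw [hcardt, nsmul_eq_mul] at h
      linarith
    have hcutH_le : cutVal x H ≤ t := by linarith
    have hsum_e_ge : (t : ℝ) ≤ ∑ i, e i := by linarith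
    have hsum_e : ∑ i, e i = t := by linarith
    have hcutH : cutVal x H = t := by linarith
    have hT2 : ∀ i, cutVal x (T i) = 2 := by
      have h := sum_eq_forall_eq Finset.univ (fun i => cutVal x (T i)) 2
        (fun i _ => h2T i) (by rw [hcardt]; linarith)
      exact fun i => h i (Finset.mem_univ i)
    have hAB_eq : ∀ i, cutVal x (A i) + cutVal x (B i) = 4 := by
      have h := sum_eq_forall_eq Finset.univ (fun i => cutVal x (A i) + cutVal x (B i)) 4
        (fun i _ => by show (4:ℝ) ≤ cutVal x (A i) + cutVal x (B i); linarith [h2A i, h2B i])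
        (by rw [hcardt]; linarith)
      exact fun i => h i (Finset.mem_univ i)
    have he1 : ∀ i, e i = 1 := fun i => by
      have h1 := hcutT i
      have h2 := hT2 i
      have h3 := hAB_eq i
      linarith
    have hA2 : ∀ i, cutVal x (A i) ≤ 2 := fun i => by linarith [hAB_eq i, h2B i]
    have hcomp : ∀ i, A i ⊆ H₁ ∨ A i ⊆ H₂ := by
      intro i
      by_cases h1 : (A i ∩ H₁).Nonempty
      · left
        by_contra hns
        obtain ⟨v, hvA, hv1⟩ := Finset.not_subset.1 hns
        have hv2 : v ∈ H₂ := by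
          rw [hH₂def, Finset.mem_sdiff]
          exact ⟨hAsubH i hvA, hv1⟩
        have h2 : (A i ∩ H₂).Nonempty := ⟨v, Finset.mem_inter.2 ⟨hvA, hv2⟩⟩
        have hA12 : (A i ∩ H₁) ∪ (A i ∩ H₂) = A i := by
          rw [← Finset.inter_union_distrib_left, hH12]
          exact Finset.inter_eq_left.2 (hAsubH i)
        have hdA : Disjoint (A i ∩ H₁) (A i ∩ H₂) :=
          hd12.mono Finset.inter_subset_right Finset.inter_subset_right
        have hzA : eVal x (A i ∩ H₁) (A i ∩ H₂) = 0 :=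
          Finset.sum_eq_zero fun p hp => Finset.sum_eq_zero fun q hq =>
            key p (Finset.mem_inter.1 hp).2 q (Finset.mem_inter.1 hq).2
        have hcu := cutVal_union hsym hdA
        rw [hA12, hzA] at hcu
        have hs1 : 2 ≤ cutVal x (A i ∩ H₁) :=
          hsub _ h1 (hsubproper _ (Finset.inter_subset_left.trans (hAsubH i)))
        have hs2 : 2 ≤ cutVal x (A i ∩ H₂) :=
          hsub _ h2 (hsubproper _ (Finset.inter_subset_left.trans (hAsubH i)))
        linarith [hA2 i]
      · right
        intro v hv
        rw [hH₂def, Finset.mem_sdiff]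
        refine ⟨hAsubH i hv, fun hv1 => h1 ⟨v, Finset.mem_inter.2 ⟨hv, hv1⟩⟩⟩
    set α : Finset (Fin t) := Finset.univ.filter (fun i => A i ⊆ H₁) with hαdef
    have hAα : ∀ i ∈ α, A i ⊆ H₁ := fun i hi => (Finset.mem_filter.1 hi).2
    have hAαc : ∀ i ∉ α, A i ⊆ H₂ := by
      intro i hi
      rcases hcomp i with h | h
      · exact absurd (Finset.mem_filter.2 ⟨Finset.mem_univ i, h⟩) hi
      · exact h
    have hBc : ∀ i S', S' ⊆ H → B i ⊆ S'ᶜ := by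
      intro i S' hS' v hv
      exact Finset.mem_compl.2 fun h => hBHc i v hv (hS' h)
    have hcut1_ge : (α.card : ℝ) ≤ cutVal x H₁ := by
      have h := sum_eVal_le hx0 α A B H₁ (fun i _ j _ hij => hTdisjA i (Finset.mem_univ i) j
        (Finset.mem_univ j) hij) hAα (fun i _ => hBc i H₁ hH₁sub)
      have h2 : ∑ i ∈ α, e i = (α.card : ℝ) := by
        rw [Finset.sum_congr rfl (fun i _ => he1 i), Finset.sum_const, nsmul_eq_mul, mul_one]
      rw [← h2]
      exact h
    have hcut2_ge : ((αᶜ).card : ℝ) ≤ cutVal x H₂ := by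
      have h := sum_eVal_le hx0 αᶜ A B H₂ (fun i _ j _ hij => hTdisjA i (Finset.mem_univ i) j
        (Finset.mem_univ j) hij) (fun i hi => hAαc i (Finset.mem_compl.1 hi))
        (fun i _ => hBc i H₂ hH₂sub)
      have h2 : ∑ i ∈ αᶜ, e i = ((αᶜ).card : ℝ) := by
        rw [Finset.sum_congr rfl (fun i _ => he1 i), Finset.sum_const, nsmul_eq_mul, mul_one]
      rw [← h2]
      exact h
    have hcardn : α.card + (αᶜ).card = t := by
      rw [Finset.card_add_card_compl, Fintype.card_fin]
    have hcardr : (α.card : ℝ) + ((αᶜ).card : ℝ) = t := by exact_mod_cast hcardn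
    have hcut1 : cutVal x H₁ = α.card := by linarith
    have hcut2 : cutVal x H₂ = (αᶜ).card := by linarith
    have hα2 : 2 ≤ α.card := by
      have : (2 : ℝ) ≤ (α.card : ℝ) := by linarith
      exact_mod_cast this
    have hαc2 : 2 ≤ (αᶜ).card := by
      have : (2 : ℝ) ≤ ((αᶜ).card : ℝ) := by linarith
      exact_mod_cast this
    have hαlt : α.card < t := by omega
    have hαclt : (αᶜ).card < t := by omega
    have final : ∀ (β : Finset (Fin t)) (H' : Finset V), Odd β.card → β.card < t →
        cutVal x H' = (β.card : ℝ) →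
        (∀ i ∈ β, (T i ∩ H').Nonempty ∧ (T i \ H').Nonempty) → False := by
      intro β H' hodd hltc hcut hne
      refine hmin β.card hltc H' (fun k => T ((β.orderIsoOfFin rfl k : β) : Fin t))
        ⟨hodd, ?_, ?_, ?_⟩
      · intro k l hkl
        refine hdisj _ _ fun hEq => hkl ?_
        exact (β.orderIsoOfFin rfl).injective (Subtype.ext hEq)
      · intro k
        exact hne _ (β.orderIsoOfFin rfl k).2
      · have hsum : ∑ k : Fin β.card, cutVal x (T ((β.orderIsoOfFin rfl k : β) : Fin t))
            = 2 * (β.card : ℝ) := by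
          rw [Finset.sum_congr rfl (fun k _ => hT2 _), Finset.sum_const]
          simp [mul_comm]
        rw [hcut, hsum]
        linarith
    have hoc : Odd (α.card + (αᶜ).card) := by rw [hcardn]; exact ht_odd
    rcases Nat.even_or_odd α.card with hev | hod
    · have hodd' : Odd ((αᶜ).card) := by
        rcases Nat.even_or_odd (αᶜ).card with h2 | h2
        · exact absurd hoc (Nat.not_odd_iff_even.2 (hev.add h2))
        · exact h2
      refine final αᶜ H₂ hodd' hαclt hcut2 ?_
      intro i hi
      have hA2' : A i ⊆ H₂ := hAαc i (Finset.mem_compl.1 hi)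
      constructor
      · exact (hAne i).mono (Finset.subset_inter (hAsubT i) hA2')
      · refine (hBne i).mono ?_
        intro v hv
        rw [Finset.mem_sdiff]
        exact ⟨hBsubT i hv, fun h => hBHc i v hv (hH₂sub h)⟩
    · refine final α H₁ hod hαlt hcut1 ?_
      intro i hi
      have hA1' : A i ⊆ H₁ := hAα i hi
      constructor
      · exact (hAne i).mono (Finset.subset_inter (hAsubT i) hA1')
      · refine (hBne i).mono ?_
        intro v hv
        rw [Finset.mem_sdiff]
        exact ⟨hBsubT i hv, fun h => hBHc i v hv (hH₁sub h)⟩
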